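/- For (u, v) ∈ ℝ², let σ(u, v) denote the 2×2 real symmetric matrix [[u, v],[v, −u]]. Let J be a 2×2 real symmetric matrix, let C > 0, β > 0, and let μ be a finite Borel measure on ℝ² whose support is contained in the closed unit disc and which is β-regular with constant C, i.e. μ(S) ≤ C·|S|^β for every Lebesgue-measurable set S ⊆ ℝ², where |S| denotes the two-dimensional Lebesgue measure of S. Then for every ε ∈ (0, 1], μ({(u, v) ∈ ℝ² : the symmetric matrix σ(u, v) + J has an eigenvalue in the open interval (−ε, ε)}) ≤ C·(4πε)^β. -/

import Mathlib

open MeasureTheory Matrix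

section helpers
open Real Set


theorem lintegral_comp_polarCoord_symm' (g : ℝ × ℝ → ENNReal) :
    (∫⁻ p in polarCoord.target, ENNReal.ofReal p.1 * g (polarCoord.symm p)) = ∫⁻ p, g p := by
  set B : ℝ × ℝ → ℝ × ℝ →L[ℝ] ℝ × ℝ := fun p =>
    LinearMap.toContinuousLinearMap (Matrix.toLin (Module.Basis.finTwoProd ℝ) (Module.Basis.finTwoProd ℝ)
      !![cos p.2, -p.1 * sin p.2; sin p.2, p.1 * cos p.2])
  have A : ∀ p ∈ polarCoord.target, HasFDerivAt polarCoord.symm (B p) p := fun p _ =>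
    hasFDerivAt_polarCoord_symm p
  have B_det : ∀ p, (B p).det = p.1 := by
    intro p
    conv_rhs => rw [← one_mul p.1, ← cos_sq_add_sin_sq p.2]
    simp only [B, neg_mul, LinearMap.det_toContinuousLinearMap, LinearMap.det_toLin,
      Matrix.det_fin_two_of, sub_neg_eq_add]
    ring
  symm
  calc
    ∫⁻ p, g p = ∫⁻ p in polarCoord.source, g p := by
      rw [← setLIntegral_univ]
      exact (setLIntegral_congr polarCoord_source_ae_eq_univ.symm)
    _ = ∫⁻ p in polarCoord.symm '' polarCoord.target, g p := by
      rw [polarCoord.symm_image_target_eq_source]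
    _ = ∫⁻ p in polarCoord.target, ENNReal.ofReal |(B p).det| * g (polarCoord.symm p) := by
      apply lintegral_image_eq_lintegral_abs_det_fderiv_mul volume
        polarCoord.open_target.measurableSet (fun p hp => (A p hp).hasFDerivWithinAt) polarCoord.symm.injOn
    _ = ∫⁻ p in polarCoord.target, ENNReal.ofReal p.1 * g (polarCoord.symm p) := by
      apply setLIntegral_congr_fun polarCoord.open_target.measurableSet
      intro x hx
      dsimp only
      rw [B_det, abs_of_pos hx.1]


theorem vol_of_pairwise (T : Set ℝ) (a b d : ℝ) (hd : 0 ≤ d) (hb : T ⊆ Set.Icc a b)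
    (h : ∀ x ∈ T, ∀ y ∈ T, |x - y| ≤ d) : volume T ≤ ENNReal.ofReal d := by
  rcases T.eq_empty_or_nonempty with rfl | hne
  · simp
  have hba : BddAbove T := ⟨b, fun x hx => (hb hx).2⟩
  have hbb : BddBelow T := ⟨a, fun x hx => (hb hx).1⟩
  have hsub : T ⊆ Set.Icc (sInf T) (sSup T) := subset_Icc_csInf_csSup hbb hba
  have hle : sSup T ≤ sInf T + d := by
    apply csSup_le hne
    intro x hx
    have : x - d ≤ sInf T := le_csInf hne (fun y hy => by
      have := h x hx y hy
      linarith [abs_le.mp this])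
    linarith
  calc volume T ≤ volume (Set.Icc (sInf T) (sSup T)) := measure_mono hsub
    _ = ENNReal.ofReal (sSup T - sInf T) := by rw [Real.volume_Icc]
    _ ≤ ENNReal.ofReal d := ENNReal.ofReal_le_ofReal (by linarith)

theorem arc_bound (c1 c2 r : ℝ) (hr : 0 < r) :
    ENNReal.ofReal r * volume {θ ∈ Set.Ioo (-π) π |
      (r * cos θ + c1)^2 + (r * sin θ + c2)^2 ≤ 1} ≤ ENNReal.ofReal (2*π) := by
  set S := {θ ∈ Set.Ioo (-π) π | (r * cos θ + c1)^2 + (r * sin θ + c2)^2 ≤ 1} with hS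
  rcases le_or_gt r 1 with h1 | h1
  · calc ENNReal.ofReal r * volume S ≤ 1 * volume (Set.Ioo (-π) π) := by
          apply mul_le_mul'
          · simpa using ENNReal.ofReal_le_ofReal h1
          · exact measure_mono (fun θ hθ => hθ.1)
      _ = ENNReal.ofReal (π - -π) := by rw [one_mul, Real.volume_Ioo]
      _ ≤ ENNReal.ofReal (2*π) := ENNReal.ofReal_le_ofReal (by ring_nf; linarith)
  · -- key pairwise estimate
    have key : ∀ x ∈ S, ∀ y ∈ S, |x - y| < π → |x - y| ≤ π / r := by
      intro x hx y hy hxy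
      wlog hle : y ≤ x generalizing x y
      · rw [abs_sub_comm]; rw [abs_sub_comm] at hxy
        exact this y hy x hx hxy (by linarith [not_le.mp hle])
      have h0 : 0 ≤ x - y := by linarith
      rw [abs_of_nonneg h0] at hxy ⊢
      -- chord bound
      have hchord : (r * cos x - r * cos y)^2 + (r * sin x - r * sin y)^2 ≤ 4 := by
        have e1 := hx.2
        have e2 := hy.2
        nlinarith [sq_nonneg (r * cos x + c1 + (r * cos y + c1)),
          sq_nonneg (r * sin x + c2 + (r * sin y + c2)),
          sq_nonneg (r * cos x + c1 - (r * cos y + c1)),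
          sq_nonneg (r * sin x + c2 - (r * sin y + c2))]
      have hexp : (r * cos x - r * cos y)^2 + (r * sin x - r * sin y)^2
          = r^2 * (2 - 2 * cos (x - y)) := by
        have := Real.cos_sub x y
        nlinarith [Real.sin_sq_add_cos_sq x, Real.sin_sq_add_cos_sq y]
      have hsinsq : Real.sin ((x - y)/2)^2 = 1/2 - cos (x-y)/2 := by
        have h := Real.sin_sq_eq_half_sub ((x-y)/2)
        rwa [show 2*((x-y)/2) = x - y by ring] at h
      have hsin_le : r * Real.sin ((x - y)/2) ≤ 1 := by
        have hs2 : (r * Real.sin ((x-y)/2))^2 ≤ 1 := by nlinarith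
        nlinarith [Real.sin_nonneg_of_nonneg_of_le_pi (x := (x-y)/2) (by linarith) (by linarith [Real.pi_pos])]
      have hjordan : 2 / π * ((x - y)/2) ≤ Real.sin ((x-y)/2) :=
        Real.mul_le_sin (by linarith) (by linarith)
      have hπ := Real.pi_pos
      rw [le_div_iff₀ hr]
      have hm : r * (2 / π * ((x - y) / 2)) ≤ r * Real.sin ((x-y)/2) :=
        mul_le_mul_of_nonneg_left hjordan hr.le
      have : r * (2 / π * ((x - y) / 2)) = (x - y) * r / π := by field_simp
      rw [this] at hm
      have : (x - y) * r / π ≤ 1 := le_trans hm hsin_le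
      calc (x - y) * r = ((x - y) * r / π) * π := by field_simp
        _ ≤ 1 * π := by nlinarith
        _ = π := one_mul π
    -- split into two halves
    have hsplit : S ⊆ (S ∩ Set.Ico 0 π) ∪ (S ∩ Set.Ioo (-π) 0) := by
      intro θ hθ
      rcases le_or_gt 0 θ with h | h
      · exact Or.inl ⟨hθ, h, hθ.1.2⟩
      · exact Or.inr ⟨hθ, hθ.1.1, h⟩
    have hhalf : ∀ (I : Set ℝ), I ⊆ Set.Icc (-π) π → (∀ x ∈ I, ∀ y ∈ I, |x - y| < π) →
        volume (S ∩ I) ≤ ENNReal.ofReal (π / r) := by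
      intro I hI hpair
      apply vol_of_pairwise _ (-π) π _ (by positivity)
      · exact fun x hx => hI hx.2
      · exact fun x hx y hy => key x hx.1 y hy.1 (hpair x hx.2 y hy.2)
    have b1 : volume (S ∩ Set.Ico 0 π) ≤ ENNReal.ofReal (π / r) := by
      apply hhalf
      · exact fun x hx => ⟨by linarith [hx.1, Real.pi_pos], le_of_lt hx.2⟩
      · intro x hx y hy; rw [abs_sub_lt_iff]; constructor <;> [linarith [hx.2, hy.1]; linarith [hy.2, hx.1]]
    have b2 : volume (S ∩ Set.Ioo (-π) 0) ≤ ENNReal.ofReal (π / r) := by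
      apply hhalf
      · exact fun x hx => ⟨le_of_lt hx.1, by linarith [hx.2, Real.pi_pos]⟩
      · intro x hx y hy; rw [abs_sub_lt_iff]; constructor <;> [linarith [hx.2, hy.1]; linarith [hy.2, hx.1]]
    calc ENNReal.ofReal r * volume S
        ≤ ENNReal.ofReal r * (volume (S ∩ Set.Ico 0 π) + volume (S ∩ Set.Ioo (-π) 0)) := by
          exact mul_le_mul' le_rfl ((measure_mono hsplit).trans (measure_union_le _ _))
      _ ≤ ENNReal.ofReal r * (ENNReal.ofReal (π / r) + ENNReal.ofReal (π / r)) :=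
          mul_le_mul' le_rfl (add_le_add b1 b2)
      _ = ENNReal.ofReal (2*π) := by
          rw [← ENNReal.ofReal_add (by positivity) (by positivity), ← ENNReal.ofReal_mul hr.le]
          congr 1
          field_simp
          ring

theorem annulus_bound (c1 c2 s ε : ℝ) (hε : 0 < ε) :
    volume {p : ℝ × ℝ | |Real.sqrt ((p.1 - c1)^2 + (p.2 - c2)^2) - s| < ε ∧
      p.1^2 + p.2^2 ≤ 1} ≤ ENNReal.ofReal (4 * π * ε) := by
  set A' : Set (ℝ × ℝ) := {q | |Real.sqrt (q.1^2 + q.2^2) - s| < ε ∧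
      (q.1 + c1)^2 + (q.2 + c2)^2 ≤ 1} with hA'def
  have m1 : Measurable fun q : ℝ × ℝ => |Real.sqrt (q.1^2 + q.2^2) - s| := by fun_prop
  have m2 : Measurable fun q : ℝ × ℝ => (q.1 + c1)^2 + (q.2 + c2)^2 := by fun_prop
  have hA' : MeasurableSet A' :=
    (measurableSet_lt m1 measurable_const).inter (measurableSet_le m2 measurable_const)
  have htrans : {p : ℝ × ℝ | |Real.sqrt ((p.1 - c1)^2 + (p.2 - c2)^2) - s| < ε ∧
      p.1^2 + p.2^2 ≤ 1} = (fun p : ℝ × ℝ => p + (-c1, -c2)) ⁻¹' A' := by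
    ext ⟨x, y⟩
    simp only [Set.mem_setOf_eq, Set.mem_preimage, Prod.mk_add_mk, hA'def]
    constructor
    · rintro ⟨h1, h2⟩
      refine ⟨by rw [show x + -c1 = x - c1 by ring, show y + -c2 = y - c2 by ring]; exact h1, ?_⟩
      rw [show x + -c1 + c1 = x by ring, show y + -c2 + c2 = y by ring]; exact h2
    · rintro ⟨h1, h2⟩
      rw [show x + -c1 = x - c1 by ring, show y + -c2 = y - c2 by ring] at h1
      rw [show x + -c1 + c1 = x by ring, show y + -c2 + c2 = y by ring] at h2
      exact ⟨h1, h2⟩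
  rw [htrans, measure_preimage_add_right]
  -- polar coordinates
  have hvol : volume A' = ∫⁻ p, A'.indicator 1 p := (lintegral_indicator_one hA').symm
  rw [hvol, ← lintegral_comp_polarCoord_symm' _]
  simp only [polarCoord_symm_apply, polarCoord_target]
  rw [Measure.volume_eq_prod, ← Measure.prod_restrict]
  have hmeas : Measurable (fun p : ℝ × ℝ =>
      ENNReal.ofReal p.1 * A'.indicator 1 (p.1 * cos p.2, p.1 * sin p.2)) := by
    apply Measurable.mul
    · fun_prop
    · exact (measurable_one.indicator hA').comp (by fun_prop)
  rw [lintegral_prod _ hmeas.aemeasurable]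
  have inner_bound : ∀ r ∈ Set.Ioi (0:ℝ),
      (∫⁻ θ in Set.Ioo (-π) π, ENNReal.ofReal r * A'.indicator 1 (r * cos θ, r * sin θ))
        ≤ (Set.Ioo (s - ε) (s + ε)).indicator (fun _ => ENNReal.ofReal (2*π)) r := by
    intro r hr
    rw [Set.mem_Ioi] at hr
    have hnorm : ∀ θ : ℝ, Real.sqrt ((r * cos θ)^2 + (r * sin θ)^2) = r := by
      intro θ
      rw [show (r * cos θ)^2 + (r * sin θ)^2 = r^2 by
        nlinarith [Real.sin_sq_add_cos_sq θ]]
      exact Real.sqrt_sq hr.le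
    by_cases hmem : r ∈ Set.Ioo (s - ε) (s + ε)
    · rw [Set.indicator_of_mem hmem]
      set S := {θ ∈ Set.Ioo (-π) π | (r * cos θ + c1)^2 + (r * sin θ + c2)^2 ≤ 1} with hSdef
      have m3 : Measurable fun θ : ℝ => (r * cos θ + c1)^2 + (r * sin θ + c2)^2 := by fun_prop
      have hSm : MeasurableSet S :=
        measurableSet_Ioo.inter (measurableSet_le m3 measurable_const)
      calc (∫⁻ θ in Set.Ioo (-π) π, ENNReal.ofReal r * A'.indicator 1 (r * cos θ, r * sin θ))
          ≤ ∫⁻ θ in Set.Ioo (-π) π, ENNReal.ofReal r * S.indicator 1 θ := by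
            apply setLIntegral_mono (by
              apply Measurable.mul measurable_const
              exact measurable_one.indicator hSm)
            intro θ hθ
            apply mul_le_mul' le_rfl
            by_cases hA : (r * cos θ, r * sin θ) ∈ A'
            · rw [Set.indicator_of_mem hA,
                Set.indicator_of_mem (show θ ∈ S from ⟨hθ, hA.2⟩)]
              exact le_rfl
            · rw [Set.indicator_of_notMem hA]; exact zero_le
        _ = ENNReal.ofReal r * volume S := by
            rw [lintegral_const_mul _ (measurable_one.indicator hSm),
              lintegral_indicator_one hSm, Measure.restrict_apply hSm,
              Set.inter_eq_left.mpr (fun θ hθ => hθ.1)]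
        _ ≤ ENNReal.ofReal (2*π) := arc_bound c1 c2 r hr
    · have hzero : ∀ θ : ℝ, A'.indicator (1 : ℝ × ℝ → ENNReal) (r * cos θ, r * sin θ) = 0 := by
        intro θ
        apply Set.indicator_of_notMem
        intro hA
        apply hmem
        have := hA.1
        rw [hnorm θ] at this
        rw [Set.mem_Ioo]
        constructor <;> [linarith [abs_lt.mp this]; linarith [abs_lt.mp this]]
      rw [Set.indicator_of_notMem hmem]
      refine le_of_eq ?_
      rw [← lintegral_zero (μ := volume.restrict (Set.Ioo (-π) π))]
      exact lintegral_congr fun θ => by rw [hzero θ, mul_zero]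
  calc (∫⁻ r in Set.Ioi (0:ℝ), ∫⁻ θ in Set.Ioo (-π) π,
          ENNReal.ofReal r * A'.indicator 1 (r * cos θ, r * sin θ))
      ≤ ∫⁻ r in Set.Ioi (0:ℝ),
          (Set.Ioo (s - ε) (s + ε)).indicator (fun _ => ENNReal.ofReal (2*π)) r :=
        setLIntegral_mono (by
          exact (measurable_const (a := ENNReal.ofReal (2*π))).indicator measurableSet_Ioo)
          inner_bound
    _ = ENNReal.ofReal (2*π) * (volume.restrict (Set.Ioi 0)) (Set.Ioo (s - ε) (s + ε)) :=
        lintegral_indicator_const measurableSet_Ioo _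
    _ ≤ ENNReal.ofReal (2*π) * volume (Set.Ioo (s - ε) (s + ε)) :=
        mul_le_mul' le_rfl (Measure.restrict_le_self _)
    _ = ENNReal.ofReal (2*π) * ENNReal.ofReal (2*ε) := by
        rw [Real.volume_Ioo]; congr 1; ring_nf
    _ = ENNReal.ofReal (4 * π * ε) := by
        rw [← ENNReal.ofReal_mul (by positivity)]
        congr 1; ring

theorem stmt18 (J : Matrix (Fin 2) (Fin 2) ℝ) (hJ : J.IsSymm)
    (C β : ℝ) (hC : 0 < C) (hβ : 0 < β)
    (μ : Measure (ℝ × ℝ)) [IsFiniteMeasure μ]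
    (hsupp : μ {p : ℝ × ℝ | p.1 ^ 2 + p.2 ^ 2 ≤ 1}ᶜ = 0)
    (hreg : ∀ S : Set (ℝ × ℝ), MeasurableSet S →
      μ S ≤ ENNReal.ofReal C * volume S ^ β)
    (ε : ℝ) (hε0 : 0 < ε) (hε1 : ε ≤ 1) :
    μ {p : ℝ × ℝ | ∃ t ∈ Set.Ioo (-ε) ε,
        t ∈ spectrum ℝ (!![p.1, p.2; p.2, -p.1] + J)} ≤
      ENNReal.ofReal (C * (4 * Real.pi * ε) ^ β) := by
  set a := J 0 0 with ha
  set b := J 0 1 with hb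
  set c := J 1 1 with hc
  set c1 : ℝ := (c - a)/2
  set c2 : ℝ := -b
  set s : ℝ := |(a + c)/2| with hs
  set A : Set (ℝ × ℝ) := {p | |Real.sqrt ((p.1 - c1)^2 + (p.2 - c2)^2) - s| < ε ∧
      p.1^2 + p.2^2 ≤ 1} with hAdef
  have m1 : Measurable fun q : ℝ × ℝ => |Real.sqrt ((q.1 - c1)^2 + (q.2 - c2)^2) - s| := by
    fun_prop
  have m2 : Measurable fun q : ℝ × ℝ => q.1^2 + q.2^2 := by fun_prop
  have hA : MeasurableSet A :=
    (measurableSet_lt m1 measurable_const).inter (measurableSet_le m2 measurable_const)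
  set D : Set (ℝ × ℝ) := {p | p.1 ^ 2 + p.2 ^ 2 ≤ 1} with hDdef
  have hsub : {p : ℝ × ℝ | ∃ t ∈ Set.Ioo (-ε) ε,
      t ∈ spectrum ℝ (!![p.1, p.2; p.2, -p.1] + J)} ⊆ A ∪ Dᶜ := by
    rintro ⟨u, v⟩ ⟨t, ht, hspec⟩
    by_cases hD : (u, v) ∈ D
    · left
      -- determinant equation
      rw [spectrum.mem_iff] at hspec
      have hdet : Matrix.det (algebraMap ℝ (Matrix (Fin 2) (Fin 2) ℝ) t
          - (!![u, v; v, -u] + J)) = 0 := by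
        by_contra h
        exact hspec ((Matrix.isUnit_iff_isUnit_det _).mpr (isUnit_iff_ne_zero.mpr h))
      have hsym : J 1 0 = J 0 1 := hJ.apply 0 1
      rw [Matrix.det_fin_two] at hdet
      simp only [Matrix.sub_apply, Matrix.add_apply, Matrix.algebraMap_matrix_apply,
        Matrix.cons_val', Matrix.cons_val_zero, Matrix.cons_val_one, Matrix.head_cons,
        Matrix.head_fin_const, Matrix.empty_val', Matrix.cons_val_fin_one, Matrix.of_apply,
        if_true, if_false] at hdet
      rw [hsym] at hdet
      norm_num at hdet
      have hq : (u - c1)^2 + (v - c2)^2 = (t - (a + c)/2)^2 := by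
        simp only [c1, c2, ha, hb, hc]
        nlinarith [hdet]
      constructor
      · show |Real.sqrt ((u - c1)^2 + (v - c2)^2) - s| < ε
        rw [hq, Real.sqrt_sq_eq_abs]
        have key := abs_abs_sub_abs_le_abs_sub (t - (a + c)/2) (-((a + c)/2))
        rw [abs_neg, show t - (a + c)/2 - -((a + c)/2) = t by ring] at key
        rw [← hs] at key
        have htlt : |t| < ε := abs_lt.mpr ⟨ht.1, ht.2⟩
        linarith
      · exact hD
    · right; exact hD
  calc μ {p : ℝ × ℝ | ∃ t ∈ Set.Ioo (-ε) ε,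
        t ∈ spectrum ℝ (!![p.1, p.2; p.2, -p.1] + J)}
      ≤ μ (A ∪ Dᶜ) := measure_mono hsub
    _ ≤ μ A + μ Dᶜ := measure_union_le _ _
    _ = μ A := by rw [hsupp, add_zero]
    _ ≤ ENNReal.ofReal C * volume A ^ β := hreg A hA
    _ ≤ ENNReal.ofReal C * (ENNReal.ofReal (4 * π * ε)) ^ β := by
        exact mul_le_mul' le_rfl (ENNReal.rpow_le_rpow (annulus_bound c1 c2 s ε hε0) hβ.le)
    _ = ENNReal.ofReal (C * (4 * Real.pi * ε) ^ β) := by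
        rw [ENNReal.ofReal_rpow_of_pos (by positivity), ← ENNReal.ofReal_mul hC.le]

end helpers
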